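/- Let a < b be real numbers, let 0 < α < 1, let f : ℝ → ℝ be continuous on [a, b], and suppose f has (right) derivative f′(a) at a. Then Γ(3−α) · (x − a)^{α−2} · (1/Γ(1−α)) ∫_a^x (x − z)^{−α} (f(z) − f(a)) dz tends to f′(a) as x tends to a from the right. (In particular, the Riemann–Liouville fractional integral of order 1−α of f − f(a) satisfies (I^{1−α}_a (f − f(a)))(x) = f′(a) (x−a)^{2−α} / Γ(3−α) + o((x−a)^{2−α}) as x → a⁺.) -/

import Mathlib

open Real MeasureTheory Filter Topology intervalIntegral

lemma auxIntInt (a x β : ℝ) (hβ : -1 < β) :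
    IntervalIntegrable (fun z => (x - z) ^ β) volume a x := by
  have h : IntervalIntegrable (fun u : ℝ => u ^ β) volume (x - a) (x - x) :=
    intervalIntegrable_rpow' hβ
  simpa using h.comp_sub_left x

lemma auxIntA (a x β : ℝ) (hax : a < x) (hβ : -1 < β) :
    ∫ z in a..x, (x - z) ^ β = (x - a) ^ (β + 1) / (β + 1) := by
  have h := intervalIntegral.integral_comp_sub_left (a := a) (b := x) (fun u => u ^ β) x
  simp only [sub_self] at h
  rw [h, integral_rpow (Or.inl hβ), Real.zero_rpow (by linarith), sub_zero]

lemma auxIntB (a x α : ℝ) (hax : a < x) (hα1 : 0 < α) (hα2 : α < 1) :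
    ∫ z in a..x, (x - z) ^ (-α) * (z - a)
      = (x - a) ^ (2 - α) / ((1 - α) * (2 - α)) := by
  have hx0 : (0:ℝ) < x - a := by linarith
  have key : ∀ z ∈ Set.uIcc a x, (x - z) ^ (-α) * (z - a)
      = (x - a) * (x - z) ^ (-α) - (x - z) ^ (-α + 1) := by
    intro z hz
    rcases eq_or_ne (x - z) 0 with h | h
    · rw [h, Real.zero_rpow (by linarith), Real.zero_rpow (by linarith)]; ring
    · rw [Real.rpow_add_one h]; ring
  rw [intervalIntegral.integral_congr key,
    intervalIntegral.integral_sub ((auxIntInt a x (-α) (by linarith)).const_mul _)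
      (auxIntInt a x (-α + 1) (by linarith)),
    intervalIntegral.integral_const_mul, auxIntA a x (-α) hax (by linarith),
    auxIntA a x (-α + 1) hax (by linarith)]
  have h1 : (x - a) * (x - a) ^ (-α + 1) = (x - a) ^ (2 - α) := by
    have h := Real.rpow_add hx0 1 (-α + 1)
    rw [Real.rpow_one] at h
    rw [show (2:ℝ) - α = 1 + (-α + 1) by ring, h]
  have h2 : (-α + 1) + 1 = 2 - α := by ring
  rw [h2, mul_div_assoc', h1, show -α + 1 = 1 - α by ring]
  have hne1 : (1:ℝ) - α ≠ 0 := by linarith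
  have hne2 : (2:ℝ) - α ≠ 0 := by linarith
  field_simp
  ring

theorem rl_integral_of_reduced_asymptotic (a b : ℝ) (hab : a < b) (α : ℝ)
    (hα1 : 0 < α) (hα2 : α < 1) (f : ℝ → ℝ)
    (hf : ContinuousOn f (Set.Icc a b)) (f' : ℝ)
    (hf' : HasDerivWithinAt f f' (Set.Ici a) a) :
    Tendsto (fun x : ℝ =>
        Real.Gamma (3 - α) * (x - a) ^ (α - 2) *
          ((1 / Real.Gamma (1 - α)) * ∫ z in a..x, (x - z) ^ (-α) * (f z - f a)))
      (𝓝[>] a) (𝓝 f') := by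
  have hΓpos : 0 < Real.Gamma (1 - α) := Real.Gamma_pos_of_pos (by linarith)
  have hΓ : Real.Gamma (3 - α) = (2 - α) * ((1 - α) * Real.Gamma (1 - α)) := by
    rw [show (3:ℝ) - α = (2 - α) + 1 by ring, Real.Gamma_add_one (by linarith),
      show (2:ℝ) - α = (1 - α) + 1 by ring, Real.Gamma_add_one (by linarith)]
  set r : ℝ → ℝ := fun z => f z - f a - (z - a) * f' with hrdef
  have hrcont : ContinuousOn r (Set.Icc a b) := by
    apply (hf.sub continuousOn_const).sub
    exact Continuous.continuousOn (by continuity)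
  have hlo := hasDerivWithinAt_iff_isLittleO.mp hf'
  rw [Metric.tendsto_nhdsWithin_nhds]
  intro ε hε
  have hε2 : 0 < ε / 2 := by linarith
  have h1 := hlo.def hε2
  obtain ⟨δ, hδ0, hδ⟩ := Metric.mem_nhdsWithin_iff.mp h1
  refine ⟨min δ (b - a), lt_min hδ0 (by linarith), ?_⟩
  intro x hx hdist
  have hax : a < x := hx
  have hx0 : 0 < x - a := by linarith
  rw [Real.dist_eq, abs_of_pos hx0] at hdist
  have hxδ : x - a < δ := lt_of_lt_of_le hdist (min_le_left _ _)
  have hxb : x ≤ b := by have := lt_of_lt_of_le hdist (min_le_right _ _); linarith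
  have hsub : Set.uIcc a x ⊆ Set.Icc a b := by
    rw [Set.uIcc_of_le hax.le]
    exact Set.Icc_subset_Icc le_rfl hxb
  have hI1 : IntervalIntegrable (fun z => (x - z) ^ (-α)) volume a x :=
    auxIntInt a x (-α) (by linarith)
  have hIr : IntervalIntegrable (fun z => (x - z) ^ (-α) * r z) volume a x :=
    hI1.mul_continuousOn (hrcont.mono hsub)
  have hI2 : IntervalIntegrable (fun z => (x - z) ^ (-α) * (z - a)) volume a x :=
    hI1.mul_continuousOn (Continuous.continuousOn (by continuity))
  have hsplit : (∫ z in a..x, (x - z) ^ (-α) * (f z - f a))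
      = (∫ z in a..x, (x - z) ^ (-α) * r z)
        + f' * ∫ z in a..x, (x - z) ^ (-α) * (z - a) := by
    rw [← intervalIntegral.integral_const_mul,
      ← intervalIntegral.integral_add hIr (hI2.const_mul f')]
    apply intervalIntegral.integral_congr
    intro z hz
    simp only [hrdef]
    ring
  have hptwise : ∀ z ∈ Set.Icc a x,
      |(x - z) ^ (-α) * r z| ≤ ε / 2 * ((x - z) ^ (-α) * (z - a)) := by
    intro z hz
    have hz1 : (0:ℝ) ≤ x - z := by linarith [hz.2]
    have hz2 : a ≤ z := hz.1
    have hrz : |r z| ≤ ε / 2 * (z - a) := by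
      have hmem : z ∈ Set.Ici a := hz2
      have hdz : dist z a < δ := by
        rw [Real.dist_eq, abs_of_nonneg (by linarith : (0:ℝ) ≤ z - a)]
        linarith [hz.2]
      have := hδ ⟨Metric.mem_ball.mpr hdz, hmem⟩
      simp only [Set.mem_setOf_eq, smul_eq_mul, Real.norm_eq_abs] at this
      rw [abs_of_nonneg (by linarith : (0:ℝ) ≤ z - a)] at this
      simpa [hrdef, mul_comm] using this
    rw [abs_mul, abs_of_nonneg (Real.rpow_nonneg hz1 _)]
    have hpow : (0:ℝ) ≤ (x - z) ^ (-α) := Real.rpow_nonneg hz1 _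
    calc (x - z) ^ (-α) * |r z| ≤ (x - z) ^ (-α) * (ε / 2 * (z - a)) := by
          exact mul_le_mul_of_nonneg_left hrz hpow
      _ = ε / 2 * ((x - z) ^ (-α) * (z - a)) := by ring
  have hRbound : |∫ z in a..x, (x - z) ^ (-α) * r z|
      ≤ ε / 2 * ((x - a) ^ (2 - α) / ((1 - α) * (2 - α))) := by
    calc |∫ z in a..x, (x - z) ^ (-α) * r z|
        ≤ ∫ z in a..x, |(x - z) ^ (-α) * r z| :=
          intervalIntegral.abs_integral_le_integral_abs hax.le
      _ ≤ ∫ z in a..x, ε / 2 * ((x - z) ^ (-α) * (z - a)) := by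
          apply intervalIntegral.integral_mono_on hax.le hIr.abs (hI2.const_mul _) hptwise
      _ = ε / 2 * ((x - a) ^ (2 - α) / ((1 - α) * (2 - α))) := by
          rw [intervalIntegral.integral_const_mul, auxIntB a x α hax hα1 hα2]
  have hpowmul : (x - a) ^ (α - 2) * (x - a) ^ (2 - α) = 1 := by
    rw [← Real.rpow_add hx0]
    norm_num
  have hne1 : (1:ℝ) - α ≠ 0 := by linarith
  have hne2 : (2:ℝ) - α ≠ 0 := by linarith
  have hGeq : Real.Gamma (3 - α) * (x - a) ^ (α - 2) *
      ((1 / Real.Gamma (1 - α)) * ∫ z in a..x, (x - z) ^ (-α) * (f z - f a)) - f'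
      = (2 - α) * (1 - α) * (x - a) ^ (α - 2)
        * ∫ z in a..x, (x - z) ^ (-α) * r z := by
    rw [hsplit, auxIntB a x α hax hα1 hα2, hΓ]
    field_simp
    linear_combination f' * hpowmul
  have hCnn : (0:ℝ) ≤ (2 - α) * (1 - α) * (x - a) ^ (α - 2) :=
    mul_nonneg (mul_nonneg (by linarith) (by linarith)) (Real.rpow_nonneg hx0.le _)
  rw [Real.dist_eq, hGeq, abs_mul, abs_of_nonneg hCnn]
  have hfin : (2 - α) * (1 - α) * (x - a) ^ (α - 2)
      * |∫ z in a..x, (x - z) ^ (-α) * r z|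
      ≤ (2 - α) * (1 - α) * (x - a) ^ (α - 2)
        * (ε / 2 * ((x - a) ^ (2 - α) / ((1 - α) * (2 - α)))) := by
    apply mul_le_mul_of_nonneg_left hRbound hCnn
  have heq : (2 - α) * (1 - α) * (x - a) ^ (α - 2)
      * (ε / 2 * ((x - a) ^ (2 - α) / ((1 - α) * (2 - α)))) = ε / 2 := by
    calc (2 - α) * (1 - α) * (x - a) ^ (α - 2)
        * (ε / 2 * ((x - a) ^ (2 - α) / ((1 - α) * (2 - α))))
        = ((x - a) ^ (α - 2) * (x - a) ^ (2 - α)) * (ε / 2) *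
          (((2 - α) * (1 - α)) / ((1 - α) * (2 - α))) := by ring
      _ = ε / 2 := by rw [hpowmul]; field_simp
  linarith [hfin, heq ▸ hfin]
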